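/- Let k ≥ 2, r, j be integers with 1 ≤ r ≤ k−2, j ≥ 3, and n = j·k + r. Then (j/2)·∑_{i=1}^{r−1} C(n,i) + j·C(n,r) + ((j−1)/2)·∑_{i=r+1}^{k−1} C(n,i) < C(n,k). -/

import Mathlib

open Finset

lemma ratio_le (n k p i : ℕ) (hp : p + k = n + 1) (hik : i < k) :
    p * n.choose i ≤ k * n.choose (i+1) := by
  have key : n.choose (i+1) * (i+1) = n.choose i * (n - i) := Nat.choose_succ_right_eq n i
  have h1 : p * (i+1) ≤ (n - i) * k := Nat.mul_le_mul (by omega) (by omega)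
  have h2 : (p * n.choose i) * (i+1) ≤ (k * n.choose (i+1)) * (i+1) := by
    calc (p * n.choose i) * (i+1) = n.choose i * (p * (i+1)) := by ring
      _ ≤ n.choose i * ((n - i) * k) := Nat.mul_le_mul_left _ h1
      _ = (n.choose i * (n - i)) * k := by ring
      _ = (n.choose (i+1) * (i+1)) * k := by rw [key]
      _ = (k * n.choose (i+1)) * (i+1) := by ring
  exact Nat.le_of_mul_le_mul_right h2 (Nat.succ_pos i)

lemma iter_le (n k p : ℕ) (hp : p + k = n + 1) :
    ∀ t i, i + t ≤ k → p^t * n.choose i ≤ k^t * n.choose (i+t) := by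
  intro t
  induction t with
  | zero => intro i _; simp
  | succ t ih =>
    intro i hit
    have h1 : p^t * n.choose i ≤ k^t * n.choose (i+t) := ih i (by omega)
    have h2 : p * n.choose (i+t) ≤ k * n.choose (i+t+1) := ratio_le n k p (i+t) hp (by omega)
    calc p^(t+1) * n.choose i = p * (p^t * n.choose i) := by ring
      _ ≤ p * (k^t * n.choose (i+t)) := Nat.mul_le_mul_left _ h1
      _ = k^t * (p * n.choose (i+t)) := by ring
      _ ≤ k^t * (k * n.choose (i+t+1)) := Nat.mul_le_mul_left _ h2
      _ = k^(t+1) * n.choose (i+(t+1)) := by ring_nf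

lemma sum_le (n k p a : ℕ) (hp : p + k = n + 1) (ha : a + k = p) :
    ∀ m, m ≤ k → a * (∑ i ∈ Icc 1 m, n.choose i) ≤ p * n.choose m := by
  intro m
  induction m with
  | zero => intro _; simp
  | succ m ih =>
    intro hm
    have h1 : a * (∑ i ∈ Icc 1 m, n.choose i) ≤ p * n.choose m := ih (by omega)
    have h2 : p * n.choose m ≤ k * n.choose (m+1) := ratio_le n k p m hp (by omega)
    rw [Finset.sum_Icc_succ_top (by omega : 1 ≤ m + 1)]
    calc a * ((∑ i ∈ Icc 1 m, n.choose i) + n.choose (m+1))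
        = a * (∑ i ∈ Icc 1 m, n.choose i) + a * n.choose (m+1) := by ring
      _ ≤ k * n.choose (m+1) + a * n.choose (m+1) := Nat.add_le_add (le_trans h1 h2) le_rfl
      _ = p * n.choose (m+1) := by rw [← ha]; ring

lemma pow_aux (r : ℕ) (hr : 1 ≤ r) : ∀ m, 9*r + 5*m + 19 < 2^(m+4)*(r+1) := by
  intro m
  induction m with
  | zero => norm_num; omega
  | succ m ih =>
    have h2 : 2^(m+1+4)*(r+1) = 2 * (2^(m+4)*(r+1)) := by ring
    rw [h2]
    omega

lemma star (d r m k p a : ℕ) (hr : 1 ≤ r) (hk : k = r + 2 + m)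
    (hp : p = (d+2)*k + r + 1) (ha : a = (d+1)*k + r + 1) :
    k^(m+2) * (k + (d+4)*a) < p^(m+2) * (d*k + 2*r + 2) := by
  have hkpos : 0 < k := by omega
  rcases Nat.eq_zero_or_pos m with hm | hm
  · -- m = 0 : polynomial in d, s with r = s+1
    obtain ⟨s, rfl⟩ : ∃ s, r = s + 1 := ⟨r - 1, by omega⟩
    have e1 : k = s + 3 := by omega
    subst hp ha
    rw [hm, e1]
    have key : (s+3)^2*((s+3) + (d+4)*((d+1)*(s+3)+(s+1)+1))
        < ((d+2)*(s+3)+(s+1)+1)^2*(d*(s+3)+2*(s+1)+2) := by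
      nlinarith [Nat.zero_le (d*s), Nat.zero_le (d*s*s), Nat.zero_le (d*s*s*s),
        Nat.zero_le (d*d*s), Nat.zero_le (d*d*s*s), Nat.zero_le (d*d*s*s*s),
        Nat.zero_le (d*d*d*s), Nat.zero_le (d*d*d*s*s), Nat.zero_le (d*d*d*s*s*s),
        Nat.zero_le (d*d*d), Nat.zero_le (s*s*s), Nat.zero_le (d*d), Nat.zero_le (s*s),
        Nat.zero_le d, Nat.zero_le s]
    exact key
  · -- m ≥ 1
    rcases Nat.eq_zero_or_pos d with hd | hd
    · -- d = 0
      subst hd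
      obtain ⟨m', rfl⟩ : ∃ m', m = m' + 1 := ⟨m - 1, by omega⟩
      have h1 : k + 4*a = 9*r + 5*m' + 19 := by subst ha hk; ring
      have h2 : k + 4*a < 2^(m'+3)*(2*r+2) := by
        have h0 := pow_aux r hr m'
        have e1 : 2^(m'+3)*(2*r+2) = 2^(m'+4)*(r+1) := by ring
        omega
      have h3 : (2*k)^(m'+3) ≤ p^(m'+3) := Nat.pow_le_pow_left (by omega) _
      calc k^(m'+1+2) * (k + 4*a) < k^(m'+3) * (2^(m'+3)*(2*r+2)) :=
            mul_lt_mul_of_pos_left h2 (Nat.pow_pos hkpos)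
        _ = 2^(m'+3) * k^(m'+3) * (2*r+2) := by ring
        _ = (2*k)^(m'+3) * (2*r+2) := by rw [mul_pow]
        _ ≤ p^(m'+3) * (2*r+2) := Nat.mul_le_mul_right _ h3
        _ = p^(m'+1+2) * (0*k + 2*r + 2) := by ring
    · -- d ≥ 1, m ≥ 1
      obtain ⟨d', rfl⟩ : ∃ d', d = d' + 1 := ⟨d - 1, by omega⟩
      have hA : (d'*d' + 7*d' + 11) + 1 ≤ (d'+3)^3*(d'+1) := by nlinarith [Nat.zero_le d']
      have p1 : ((d'+1)*(d'+1) + 5*(d'+1) + 5)*k + 1 ≤ ((d'+3)^3*(d'+1))*k := by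
        have e0 : (d'+1)*(d'+1) + 5*(d'+1) + 5 = d'*d' + 7*d' + 11 := by ring
        rw [e0]
        calc (d'*d' + 7*d' + 11)*k + 1 ≤ (d'*d' + 7*d' + 11)*k + k := by omega
          _ = (d'*d' + 7*d' + 11 + 1)*k := by ring
          _ ≤ ((d'+3)^3*(d'+1))*k := Nat.mul_le_mul_right _ hA
      have p2 : (d'+1+4)*(r+1) ≤ (d'+3)^3*(2*r+2) := by nlinarith [Nat.zero_le d', Nat.zero_le r]
      have h1 : k + (d'+1+4)*a < (d'+1+2)^3 * ((d'+1)*k + 2*r + 2) := by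
        have e1 : k + (d'+1+4)*a = ((d'+1)*(d'+1) + 5*(d'+1) + 5)*k + (d'+1+4)*(r+1) := by
          subst ha; ring
        have e2 : (d'+1+2)^3 * ((d'+1)*k + 2*r + 2)
            = ((d'+3)^3*(d'+1))*k + (d'+3)^3*(2*r+2) := by ring
        omega
      have h15 : (d'+1+2)^3 ≤ (d'+1+2)^(m+2) := Nat.pow_le_pow_right (by omega) (by omega)
      have h2 : k + (d'+1+4)*a < (d'+1+2)^(m+2) * ((d'+1)*k + 2*r + 2) :=
        lt_of_lt_of_le h1 (Nat.mul_le_mul_right _ h15)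
      have h3 : ((d'+1+2)*k)^(m+2) ≤ p^(m+2) := Nat.pow_le_pow_left (by omega) _
      calc k^(m+2) * (k + (d'+1+4)*a)
          < k^(m+2) * ((d'+1+2)^(m+2) * ((d'+1)*k + 2*r + 2)) :=
            mul_lt_mul_of_pos_left h2 (Nat.pow_pos hkpos)
        _ = (d'+1+2)^(m+2) * k^(m+2) * ((d'+1)*k + 2*r + 2) := by ring
        _ = ((d'+1+2)*k)^(m+2) * ((d'+1)*k + 2*r + 2) := by rw [mul_pow]
        _ ≤ p^(m+2) * ((d'+1)*k + 2*r + 2) := Nat.mul_le_mul_right _ h3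

set_option maxHeartbeats 1000000 in
open Finset in
theorem farkas_ineq_j_ge_three (k r j n : ℕ) (hk : 2 ≤ k) (hr1 : 1 ≤ r) (hr2 : r ≤ k - 2)
    (hj : 3 ≤ j) (hn : n = j * k + r) :
    ((j : ℚ) / 2) * ∑ i ∈ Icc 1 (r - 1), (Nat.choose n i : ℚ)
      + (j : ℚ) * (Nat.choose n r : ℚ)
      + (((j : ℚ) - 1) / 2) * ∑ i ∈ Icc (r + 1) (k - 1), (Nat.choose n i : ℚ)
      < (Nat.choose n k : ℚ) := by
  obtain ⟨d, rfl⟩ : ∃ d, j = d + 3 := ⟨j - 3, by omega⟩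
  obtain ⟨m, hkm⟩ : ∃ m, k = r + 2 + m := ⟨k - (r+2), by omega⟩
  have hkn : k ≤ n := by
    have h1 : 1*k ≤ (d+3)*k := Nat.mul_le_mul_right k (by omega)
    rw [hn]; omega
  have hp : ((d+2)*k + r + 1) + k = n + 1 := by rw [hn]; ring
  have ha : ((d+1)*k + r + 1) + k = (d+2)*k + r + 1 := by ring
  have hck : 0 < n.choose k := Nat.choose_pos hkn
  have HS : ((d+1)*k + r + 1) * (∑ i ∈ Icc 1 (k-1), n.choose i)
      ≤ ((d+2)*k + r + 1) * n.choose (k-1) := sum_le n k _ _ hp ha (k-1) (by omega)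
  have HSA : ((d+1)*k + r + 1) * (∑ i ∈ Icc 1 (r-1), n.choose i)
      ≤ ((d+2)*k + r + 1) * n.choose (r-1) := sum_le n k _ _ hp ha (r-1) (by omega)
  have Hck : ((d+2)*k + r + 1) * n.choose (k-1) = k * n.choose k := by
    have h := Nat.choose_succ_right_eq n (k-1)
    have e : k - 1 + 1 = k := by omega
    rw [e] at h
    have e2 : n - (k-1) = (d+2)*k + r + 1 := by omega
    rw [e2] at h
    linear_combination -h
  have Hit1 : ((d+2)*k + r + 1)^(m+2) * n.choose r ≤ k^(m+2) * n.choose (r+(m+2)) :=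
    iter_le n k _ hp (m+2) r (by omega)
  have er : r + (m+2) = k := by omega
  rw [er] at Hit1
  have Hit2 : ((d+2)*k + r + 1)^(m+3) * n.choose (r-1) ≤ k^(m+3) * n.choose ((r-1)+(m+3)) :=
    iter_le n k _ hp (m+3) (r-1) (by omega)
  have er2 : (r-1) + (m+3) = k := by omega
  rw [er2] at Hit2
  have Hstar : k^(m+2) * (k + (d+4)*((d+1)*k + r + 1))
      < ((d+2)*k + r + 1)^(m+2) * (d*k + 2*r + 2) := star d r m k _ _ hr1 hkm rfl rfl
  -- move to ℚ
  set SA : ℚ := ∑ i ∈ Icc 1 (r-1), (n.choose i : ℚ) with hSA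
  set SB : ℚ := ∑ i ∈ Icc (r+1) (k-1), (n.choose i : ℚ) with hSB
  set SK : ℚ := ∑ i ∈ Icc 1 (k-1), (n.choose i : ℚ) with hSK
  set ck : ℚ := (n.choose k : ℚ) with hckq0
  set cr : ℚ := (n.choose r : ℚ) with hcr
  set cr1 : ℚ := (n.choose (r-1) : ℚ) with hcr1
  set ck1 : ℚ := (n.choose (k-1) : ℚ) with hck1
  have qHS : (((d:ℚ)+1)*k + r + 1) * SK ≤ (((d:ℚ)+2)*k + r + 1) * ck1 := by
    rw [hSK, hck1]; exact_mod_cast HS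
  have qHSA : (((d:ℚ)+1)*k + r + 1) * SA ≤ (((d:ℚ)+2)*k + r + 1) * cr1 := by
    rw [hSA, hcr1]; exact_mod_cast HSA
  have qHck : (((d:ℚ)+2)*k + r + 1) * ck1 = (k:ℚ) * ck := by
    rw [hck1, hckq0]; exact_mod_cast Hck
  have qHit1 : (((d:ℚ)+2)*k + r + 1)^(m+2) * cr ≤ (k:ℚ)^(m+2) * ck := by
    rw [hcr, hckq0]; exact_mod_cast Hit1
  have qHit2 : (((d:ℚ)+2)*k + r + 1)^(m+3) * cr1 ≤ (k:ℚ)^(m+3) * ck := by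
    rw [hcr1, hckq0]; exact_mod_cast Hit2
  have qHit2' : (((d:ℚ)+2)*k + r + 1)^(m+2) * (((d:ℚ)+2)*k + r + 1) * cr1
      ≤ (k:ℚ)^(m+2) * (k:ℚ) * ck := by
    calc (((d:ℚ)+2)*k + r + 1)^(m+2) * (((d:ℚ)+2)*k + r + 1) * cr1
        = (((d:ℚ)+2)*k + r + 1)^(m+3) * cr1 := by rw [← pow_succ]
      _ ≤ (k:ℚ)^(m+3) * ck := qHit2
      _ = (k:ℚ)^(m+2) * (k:ℚ) * ck := by rw [pow_succ]
  have qHstar : (k:ℚ)^(m+2) * ((k:ℚ) + ((d:ℚ)+4)*(((d:ℚ)+1)*k + r + 1))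
      < (((d:ℚ)+2)*k + r + 1)^(m+2) * ((d:ℚ)*k + 2*r + 2) := by
    exact_mod_cast Hstar
  have hckq : (0:ℚ) < ck := by rw [hckq0]; exact_mod_cast hck
  have hkq : (0:ℚ) < (k:ℚ) := by
    have : 0 < k := by omega
    exact_mod_cast this
  have hAq : (0:ℚ) < ((d:ℚ)+1)*k + r + 1 := by positivity
  have hPq : (0:ℚ) < ((d:ℚ)+2)*k + r + 1 := by positivity
  -- split the full sum
  have hsplit : SK = SA + cr + SB := by
    rw [hSK, hSA, hSB, hcr]
    have i1 : Icc 1 (r-1) = Ioc 0 (r-1) := Finset.Icc_add_one_left_eq_Ioc 0 (r-1)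
    have i2 : Icc 1 (k-1) = Ioc 0 (k-1) := Finset.Icc_add_one_left_eq_Ioc 0 (k-1)
    have i3 : Icc (r+1) (k-1) = Ioc r (k-1) := Finset.Icc_add_one_left_eq_Ioc r (k-1)
    have i4 : Ioc (r-1) r = {r} := by
      ext x
      simp only [Finset.mem_Ioc, Finset.mem_singleton]
      omega
    rw [i1, i2, i3]
    have s1 := Finset.sum_Ioc_consecutive (fun i => (n.choose i : ℚ))
      (show 0 ≤ r-1 by omega) (show r-1 ≤ r by omega)
    have s2 := Finset.sum_Ioc_consecutive (fun i => (n.choose i : ℚ))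
      (show 0 ≤ r by omega) (show r ≤ k-1 by omega)
    have s3 : (∑ i ∈ Ioc (r-1) r, (n.choose i : ℚ)) = (n.choose r : ℚ) := by
      rw [i4, Finset.sum_singleton]
    rw [← s2, ← s1, s3]
  -- key inequality
  have key : ((d:ℚ)+2)*SK + SA + ((d:ℚ)+4)*cr < 2*ck := by
    have hX : (0:ℚ) < (((d:ℚ)+1)*k + r + 1) * (((d:ℚ)+2)*k + r + 1)^(m+2) := by positivity
    have q1 : (((d:ℚ)+1)*k + r + 1) * SK ≤ (k:ℚ) * ck := qHS.trans_eq qHck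
    have q2 : (((d:ℚ)+1)*k + r + 1) * (((d:ℚ)+2)*k + r + 1)^(m+2) * SA ≤ (k:ℚ)^(m+2) * (k:ℚ) * ck := by
      calc (((d:ℚ)+1)*k + r + 1) * (((d:ℚ)+2)*k + r + 1)^(m+2) * SA
          = (((d:ℚ)+2)*k + r + 1)^(m+2) * ((((d:ℚ)+1)*k + r + 1) * SA) := by ring
        _ ≤ (((d:ℚ)+2)*k + r + 1)^(m+2) * ((((d:ℚ)+2)*k + r + 1) * cr1) :=
            mul_le_mul_of_nonneg_left qHSA (by positivity)
        _ = (((d:ℚ)+2)*k + r + 1)^(m+2) * (((d:ℚ)+2)*k + r + 1) * cr1 := by ring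
        _ ≤ (k:ℚ)^(m+2) * (k:ℚ) * ck := qHit2'
    have m1 : ((d:ℚ)+2)*(((d:ℚ)+2)*k + r + 1)^(m+2)*((((d:ℚ)+1)*k + r + 1) * SK)
        ≤ ((d:ℚ)+2)*(((d:ℚ)+2)*k + r + 1)^(m+2)*((k:ℚ)*ck) :=
      mul_le_mul_of_nonneg_left q1 (by positivity)
    have m3 : ((d:ℚ)+4)*((((d:ℚ)+1)*k + r + 1))*((((d:ℚ)+2)*k + r + 1)^(m+2)*cr)
        ≤ ((d:ℚ)+4)*((((d:ℚ)+1)*k + r + 1))*((k:ℚ)^(m+2)*ck) :=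
      mul_le_mul_of_nonneg_left qHit1 (by positivity)
    have m5 : ck*((k:ℚ)^(m+2) * ((k:ℚ) + ((d:ℚ)+4)*(((d:ℚ)+1)*k + r + 1)))
        < ck*((((d:ℚ)+2)*k + r + 1)^(m+2) * ((d:ℚ)*k + 2*r + 2)) :=
      mul_lt_mul_of_pos_left qHstar hckq
    have hfin : ((((d:ℚ)+1)*k + r + 1) * (((d:ℚ)+2)*k + r + 1)^(m+2))
          * (((d:ℚ)+2)*SK + SA + ((d:ℚ)+4)*cr)
        < ((((d:ℚ)+1)*k + r + 1) * (((d:ℚ)+2)*k + r + 1)^(m+2)) * (2*ck) := by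
      linarith [m1, q2, m3, m5]
    exact lt_of_mul_lt_mul_left hfin (le_of_lt hX)
  rw [hsplit] at key
  have hcast : ((d:ℚ)+3) = ((d+3 : ℕ) : ℚ) := by push_cast; ring
  rw [← hcast]
  linarith [key]
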